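/- The Choi map φ : M₃(ℂ) → M₃(ℂ), defined by φ([a_ij]) having diagonal entries (a₁₁+a₃₃, a₂₂+a₁₁, a₃₃+a₂₂) and off-diagonal entries −a_ij, is a positive linear map. -/

import Mathlib

open Matrix ComplexOrder

/-- The Choi map on `M₃(ℂ)`. -/
def choiMap (A : Matrix (Fin 3) (Fin 3) ℂ) : Matrix (Fin 3) (Fin 3) ℂ :=
  !![A 0 0 + A 2 2, -A 0 1, -A 0 2;
     -A 1 0, A 1 1 + A 0 0, -A 1 2;
     -A 2 0, -A 2 1, A 2 2 + A 1 1]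

lemma choi_amgm (a b c : ℝ) (ha : 0 ≤ a) (hb : 0 ≤ b) (hc : 0 ≤ c) :
    3*(a*b*c) ≤ a^2*b + b^2*c + c^2*a := by
  nlinarith [mul_nonneg ha (sq_nonneg (b-c)), mul_nonneg hb (sq_nonneg (a-c)),
    mul_nonneg hc (sq_nonneg (a-b)), mul_nonneg ha (sq_nonneg (a-b)),
    mul_nonneg hb (sq_nonneg (b-c)), mul_nonneg hc (sq_nonneg (c-a))]

lemma choi_quad_nonneg (α β γ s t : ℝ) (hα : 0 ≤ α) (hγ : 0 ≤ γ) (hdet : β^2 ≤ α*γ) :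
    0 ≤ α*s^2 - 2*β*s*t + γ*t^2 := by
  rcases eq_or_lt_of_le hα with h0 | hpos
  · have hβ : β = 0 := by nlinarith [sq_nonneg β]
    rw [hβ, ← h0]
    nlinarith [mul_nonneg hγ (sq_nonneg t)]
  · have h : 0 ≤ α * (α*s^2 - 2*β*s*t + γ*t^2) := by
      have hid : α * (α*s^2 - 2*β*s*t + γ*t^2) = (α*s - β*t)^2 + (α*γ - β^2)*t^2 := by ring
      rw [hid]
      exact add_nonneg (sq_nonneg _) (mul_nonneg (by linarith) (sq_nonneg _))
    exact nonneg_of_mul_nonneg_right h hpos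

lemma choi_key (p0 p1 p2 u0 u1 u2 : ℝ) :
    0 ≤ p0^2*(u0^2+u2^2) + p1^2*(u1^2+u0^2) + p2^2*(u2^2+u1^2)
        - 2*(p0*p1*u0*u1 + p1*p2*u1*u2 + p0*p2*u0*u2) := by
  rcases eq_or_lt_of_le (by positivity : (0:ℝ) ≤ u0^2 + u2^2) with h | hac
  · have h0 : u0 = 0 := by nlinarith [sq_nonneg u0, sq_nonneg u2]
    have h2 : u2 = 0 := by nlinarith [sq_nonneg u0, sq_nonneg u2]
    rw [h0, h2]; nlinarith [mul_nonneg (sq_nonneg p1) (sq_nonneg u1),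
      mul_nonneg (sq_nonneg p2) (sq_nonneg u1)]
  · have hQ : 0 ≤ (u0^4 + u0^2*u2^2 + u1^2*u2^2)*p1^2
        - 2*(u1*u2*(2*u0^2+u2^2))*p1*p2 + (u0^2*u1^2 + u1^2*u2^2 + u2^4)*p2^2 := by
      apply choi_quad_nonneg _ _ _ _ _ (by positivity) (by positivity)
      have hdet : (u0^4 + u0^2*u2^2 + u1^2*u2^2) * (u0^2*u1^2 + u1^2*u2^2 + u2^4)
          - (u1*u2*(2*u0^2+u2^2))^2
          = (u0^2+u2^2) * ((u0^2)^2*(u1^2) + (u1^2)^2*(u2^2) + (u2^2)^2*(u0^2)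
              - 3*((u0^2)*(u1^2)*(u2^2))) := by ring
      nlinarith [hdet, mul_nonneg hac.le
        (sub_nonneg.2 (choi_amgm (u0^2) (u1^2) (u2^2) (sq_nonneg _) (sq_nonneg _) (sq_nonneg _)))]
    have h : 0 ≤ (u0^2+u2^2) * (p0^2*(u0^2+u2^2) + p1^2*(u1^2+u0^2) + p2^2*(u2^2+u1^2)
        - 2*(p0*p1*u0*u1 + p1*p2*u1*u2 + p0*p2*u0*u2)) := by
      have hid : (u0^2+u2^2) * (p0^2*(u0^2+u2^2) + p1^2*(u1^2+u0^2) + p2^2*(u2^2+u1^2)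
          - 2*(p0*p1*u0*u1 + p1*p2*u1*u2 + p0*p2*u0*u2))
          = ((u0^2+u2^2)*p0 - u0*u1*p1 - u0*u2*p2)^2
            + ((u0^4 + u0^2*u2^2 + u1^2*u2^2)*p1^2
              - 2*(u1*u2*(2*u0^2+u2^2))*p1*p2 + (u0^2*u1^2 + u1^2*u2^2 + u2^4)*p2^2) := by
        ring
      rw [hid]
      exact add_nonneg (sq_nonneg _) hQ
    exact nonneg_of_mul_nonneg_right h hac

/-- The value of the Choi quadratic form on a rank-one matrix. -/
noncomputable def choiE (x v : Fin 3 → ℂ) : ℂ :=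
  star x ⬝ᵥ (choiMap (Matrix.of fun i j => (starRingEnd ℂ) (v i) * v j)) *ᵥ x

lemma choiE_eq (x v : Fin 3 → ℂ) :
    choiE x v = ((Complex.normSq (x 0) * Complex.normSq (v 2)
      + Complex.normSq (x 1) * Complex.normSq (v 0)
      + Complex.normSq (x 2) * Complex.normSq (v 1)
      + 2*(Complex.normSq (x 0 * v 0) + Complex.normSq (x 1 * v 1) + Complex.normSq (x 2 * v 2))
      - Complex.normSq (x 0 * v 0 + x 1 * v 1 + x 2 * v 2) : ℝ) : ℂ) := by
  simp only [choiE, choiMap, mulVec, dotProduct, Fin.sum_univ_three, Matrix.of_apply,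
    Pi.star_apply, RCLike.star_def, Complex.ofReal_sub, Complex.ofReal_add, Complex.ofReal_mul,
    Complex.ofReal_ofNat, Complex.normSq_eq_conj_mul_self, map_add, _root_.map_mul,
    Matrix.cons_val', Matrix.cons_val_zero, Matrix.cons_val_one, Matrix.head_cons,
    Matrix.head_fin_const, Matrix.cons_val_fin_one, Matrix.empty_val',
    Matrix.cons_val_two, Matrix.tail_cons]
  ring

lemma choiE_nonneg (x v : Fin 3 → ℂ) : 0 ≤ choiE x v := by
  rw [choiE_eq, Complex.zero_le_real]
  have htri : ‖x 0 * v 0 + x 1 * v 1 + x 2 * v 2‖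
      ≤ ‖x 0‖ * ‖v 0‖ + ‖x 1‖ * ‖v 1‖
        + ‖x 2‖ * ‖v 2‖ := by
    calc ‖x 0 * v 0 + x 1 * v 1 + x 2 * v 2‖
        ≤ ‖x 0 * v 0 + x 1 * v 1‖ + ‖x 2 * v 2‖ :=
          norm_add_le _ _
      _ ≤ ‖x 0 * v 0‖ + ‖x 1 * v 1‖ + ‖x 2 * v 2‖ := by
          have := norm_add_le (x 0 * v 0) (x 1 * v 1); linarith
      _ = _ := by simp [norm_mul]
  have hsq : Complex.normSq (x 0 * v 0 + x 1 * v 1 + x 2 * v 2)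
      ≤ (‖x 0‖ * ‖v 0‖ + ‖x 1‖ * ‖v 1‖
        + ‖x 2‖ * ‖v 2‖)^2 := by
    rw [← Complex.sq_norm]
    have h0 : 0 ≤ ‖x 0 * v 0 + x 1 * v 1 + x 2 * v 2‖ := norm_nonneg _
    nlinarith [htri, h0]
  have hkey := choi_key (‖x 0‖) (‖x 1‖) (‖x 2‖)
    (‖v 0‖) (‖v 1‖) (‖v 2‖)
  have e0 : ∀ z : ℂ, Complex.normSq z = ‖z‖ ^ 2 := fun z => (Complex.sq_norm z).symm
  rw [e0, e0, e0, e0, e0, e0, e0, e0, e0]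
  simp only [norm_mul]
  nlinarith [hsq, hkey]

theorem stmt12 :
    IsLinearMap ℂ choiMap ∧
    ∀ A : Matrix (Fin 3) (Fin 3) ℂ, A.PosSemidef → (choiMap A).PosSemidef := by
  constructor
  · constructor
    · intro A B
      ext i j
      fin_cases i <;> fin_cases j <;>
        simp [choiMap, Matrix.add_apply] <;> ring
    · intro c A
      ext i j
      fin_cases i <;> fin_cases j <;>
        simp [choiMap, Matrix.smul_apply, smul_eq_mul] <;> ring
  · intro A hA
    apply Matrix.PosSemidef.of_dotProduct_mulVec_nonneg
    · -- Hermitian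
      have h := hA.1
      ext i j
      fin_cases i <;> fin_cases j <;>
        simp [choiMap, Matrix.conjTranspose_apply, map_add, h.apply]
    · intro y
      obtain ⟨B, rfl⟩ : ∃ B : Matrix (Fin 3) (Fin 3) ℂ, Bᴴ * B = A := by
        classical
        open scoped MatrixOrder in
        obtain ⟨X, hX, -, hXA⟩ :=
          CFC.exists_sqrt_of_isSelfAdjoint_of_quasispectrumRestricts hA.isHermitian
            (QuasispectrumRestricts.nnreal_of_nonneg hA.nonneg)
        exact ⟨X, by rw [← Matrix.star_eq_conjTranspose, hX.star_eq, hXA]⟩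
      have hdecomp : star y ⬝ᵥ (choiMap (Bᴴ * B)) *ᵥ y
          = choiE y (fun i => B 0 i) + choiE y (fun i => B 1 i) + choiE y (fun i => B 2 i) := by
        simp only [choiE, choiMap, mulVec, dotProduct, Fin.sum_univ_three, Matrix.of_apply,
          Matrix.mul_apply, Matrix.conjTranspose_apply, Pi.star_apply, RCLike.star_def,
          Matrix.cons_val', Matrix.cons_val_zero, Matrix.cons_val_one, Matrix.head_cons,
          Matrix.head_fin_const, Matrix.cons_val_fin_one, Matrix.empty_val',
          Matrix.cons_val_two, Matrix.tail_cons]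
        ring
      rw [hdecomp]
      exact add_nonneg (add_nonneg (choiE_nonneg _ _) (choiE_nonneg _ _)) (choiE_nonneg _ _)
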